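/- Suppose a, b, c ∈ F_ε are strictly positive, b ≥ c, and b < a/2 (radix 2). Then d := fl_ε(a − b) satisfies d ≥ a/2, and consequently e := fl_ε(d − c) > 0 and a − b − c > 0. -/
import Mathlib


/-- Floating point numbers with radix `β` and `t` digits of mantissa. -/
def Fset (β t : ℕ) : Set ℝ :=
  {0} ∪ {x | ∃ m e : ℤ, x = (m : ℝ) * (β : ℝ) ^ e ∧ (β : ℤ) ^ t ≤ |m| ∧ |m| < (β : ℤ) ^ (t + 1)}

/-- Case 3 of the sign-correct comparison lemma: if `a, b, c` are strictly
positive radix-2 floats with `b ≥ c` and `b < a/2`, then `d = fl(a−b) ≥ a/2`,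
`e = fl(d−c) > 0`, and `a − b − c > 0`. -/
theorem sign_correct_case3 (t : ℕ) (fl : ℝ → ℝ)
    (hmem : ∀ z, fl z ∈ Fset 2 t)
    (hnear : ∀ z, ∀ y ∈ Fset 2 t, |fl z - z| ≤ |y - z|)
    (hmono : ∀ u v : ℝ, u ≤ v → fl u ≤ fl v)
    (hfix : ∀ u ∈ Fset 2 t, fl u = u)
    (hhalf : ∀ u ∈ Fset 2 t, u / 2 ∈ Fset 2 t)
    (a b c d e : ℝ) (ha : a ∈ Fset 2 t) (hb : b ∈ Fset 2 t) (hc : c ∈ Fset 2 t)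
    (ha0 : 0 < a) (hb0 : 0 < b) (hc0 : 0 < c) (hbc : c ≤ b) (hba : b < a / 2)
    (hd : d = fl (a - b)) (he : e = fl (d - c)) :
    a / 2 ≤ d ∧ 0 < e ∧ 0 < a - b - c := by
  -- halves of c are representable
  have hpow : ∀ n : ℕ, c / 2 ^ n ∈ Fset 2 t := by
    intro n
    induction n with
    | zero => simpa using hc
    | succ n ih =>
      have := hhalf _ ih
      have h2 : c / 2 ^ (n + 1) = c / 2 ^ n / 2 := by ring
      rwa [h2]
  have hd2 : a / 2 ≤ d := by
    have h1 : a / 2 ≤ a - b := by linarith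
    have := hmono _ _ h1
    rw [hfix _ (hhalf _ ha)] at this
    rw [hd]; exact this
  have hcb : c < a / 2 := lt_of_le_of_lt hbc hba
  have hdc : 0 < d - c := by linarith
  -- find n with c / 2^n ≤ d - c
  obtain ⟨n, hn⟩ := pow_unbounded_of_one_lt (c / (d - c)) (by norm_num : (1:ℝ) < 2)
  have hle : c / 2 ^ n ≤ d - c := by
    rw [div_le_iff₀ (by positivity)]
    rw [div_lt_iff₀ hdc] at hn
    nlinarith [pow_pos (by norm_num : (0:ℝ) < 2) n]
  have he1 : c / 2 ^ n ≤ e := by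
    rw [he]
    have := hmono _ _ hle
    rwa [hfix _ (hpow n)] at this
  have he0 : 0 < e := lt_of_lt_of_le (by positivity) he1
  exact ⟨hd2, he0, by linarith⟩
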